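/- Let v be a locally semiconcave function on an open set of ℝⁿ and let x : [a,b] → ℝⁿ be a Lipschitz arc with image contained in that open set. If 0 ∈ D⁺v(x(s)) for every s ∈ [a,b], then the composite function s ↦ v(x(s)) is constant on [a,b]. Consequently, if v(x([a,b])) contains a nontrivial closed interval, then there exists s₀ ∈ [a,b] with 0 ∉ D⁺v(x(s₀)). -/
import Mathlib


open RealInnerProductSpace
open Set

/-- The (Dini) superdifferential of `v` at `x`, relative to `U`. -/
def superdiffOn {n : ℕ} (v : EuclideanSpace ℝ (Fin n) → ℝ) (U : Set (EuclideanSpace ℝ (Fin n)))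
    (x : EuclideanSpace ℝ (Fin n)) : Set (EuclideanSpace ℝ (Fin n)) :=
  {p | ∀ ε > 0, ∃ δ > 0, ∀ y ∈ U, ‖y - x‖ < δ → v y - v x - ⟪p, y - x⟫ ≤ ε * ‖y - x‖}

/-- `v` is locally semiconcave (with linear modulus) on the open set `U`. -/
def LocallySemiconcaveOn {n : ℕ} (v : EuclideanSpace ℝ (Fin n) → ℝ)
    (U : Set (EuclideanSpace ℝ (Fin n))) : Prop :=
  ∀ z ∈ U, ∃ C : ℝ, ∃ δ > 0, Metric.ball z δ ⊆ U ∧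
    ∀ w ∈ Metric.ball z δ, ∀ q ∈ superdiffOn v U w, ∀ y ∈ Metric.ball z δ,
      v y ≤ v w + ⟪q, y - w⟫ + C / 2 * ‖y - w‖ ^ 2

open Topology Filter

/-- Along a Lipschitz arc on which `0 ∈ D⁺v` everywhere, a locally semiconcave `v` is
constant; consequently, if `v(x([a,b]))` contains a nontrivial closed interval, then
`0 ∉ D⁺v(x(s₀))` for some `s₀`. -/
theorem const_along_arc_and_regular_point {n : ℕ}
    (U : Set (EuclideanSpace ℝ (Fin n))) (hUo : IsOpen U)
    (v : EuclideanSpace ℝ (Fin n) → ℝ) (hv : LocallySemiconcaveOn v U)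
    (a b : ℝ) (hab : a < b) (γ : ℝ → EuclideanSpace ℝ (Fin n)) (L : NNReal)
    (hLip : LipschitzOnWith L γ (Icc a b)) (hmaps : ∀ s ∈ Icc a b, γ s ∈ U) :
    ((∀ s ∈ Icc a b, (0 : EuclideanSpace ℝ (Fin n)) ∈ superdiffOn v U (γ s)) →
      ∀ s ∈ Icc a b, v (γ s) = v (γ a)) ∧
    (∀ c d : ℝ, c < d → Icc c d ⊆ v '' (γ '' Icc a b) →
      ∃ s₀ ∈ Icc a b, (0 : EuclideanSpace ℝ (Fin n)) ∉ superdiffOn v U (γ s₀)) := by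
  have key : (∀ s ∈ Icc a b, (0 : EuclideanSpace ℝ (Fin n)) ∈ superdiffOn v U (γ s)) →
      ∀ s ∈ Icc a b, v (γ s) = v (γ a) := by
    intro h0
    have hderiv : ∀ t ∈ Icc a b,
        HasDerivWithinAt (fun s => v (γ s)) 0 (Icc a b) t := by
      intro t ht
      obtain ⟨C, δ, hδ, hballU, hsc⟩ := hv (γ t) (hmaps t ht)
      set K : ℝ := |C| / 2 * (L : ℝ) ^ 2 + 1 with hKdef
      have hKpos : (0 : ℝ) < K := by positivity
      set r : ℝ := δ / ((L : ℝ) + 1) with hrdef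
      have hrpos : 0 < r := by positivity
      have hquad : ∀ t' ∈ Icc a b, |t' - t| < r →
          |v (γ t') - v (γ t)| ≤ K * (t' - t) ^ 2 := by
        intro t' ht' hlt
        have hdist : ‖γ t' - γ t‖ ≤ (L : ℝ) * |t' - t| := by
          have h := hLip.dist_le_mul t' ht' t ht
          rwa [dist_eq_norm, Real.dist_eq] at h
        have hmem : γ t' ∈ Metric.ball (γ t) δ := by
          rw [Metric.mem_ball, dist_eq_norm]
          have h5 : (L : ℝ) * |t' - t| ≤ (L : ℝ) * r :=
            mul_le_mul_of_nonneg_left hlt.le L.coe_nonneg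
          have h7 : ((L : ℝ) + 1) * r = δ := by
            rw [hrdef]; field_simp
          nlinarith [hrpos]
        have hmem0 : γ t ∈ Metric.ball (γ t) δ := Metric.mem_ball_self hδ
        have h1 := hsc (γ t') hmem 0 (h0 t' ht') (γ t) hmem0
        have h2 := hsc (γ t) hmem0 0 (h0 t ht) (γ t') hmem
        simp only [inner_zero_left, add_zero] at h1 h2
        have hn : ‖γ t - γ t'‖ = ‖γ t' - γ t‖ := norm_sub_rev _ _
        rw [hn] at h1
        have hb : |C| / 2 * ‖γ t' - γ t‖ ^ 2 ≤ K * (t' - t) ^ 2 := by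
          have h3 : ‖γ t' - γ t‖ ^ 2 ≤ ((L : ℝ) * |t' - t|) ^ 2 := by
            apply sq_le_sq' <;> nlinarith [norm_nonneg (γ t' - γ t)]
          have h4 : ((L : ℝ) * |t' - t|) ^ 2 = (L : ℝ) ^ 2 * (t' - t) ^ 2 := by
            rw [mul_pow, sq_abs]
          nlinarith [abs_nonneg C, norm_nonneg (γ t' - γ t), sq_nonneg (t' - t)]
        have hC : C / 2 * ‖γ t' - γ t‖ ^ 2 ≤ |C| / 2 * ‖γ t' - γ t‖ ^ 2 := by
          have := le_abs_self C
          nlinarith [sq_nonneg ‖γ t' - γ t‖]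
        rw [abs_sub_le_iff]
        constructor
        · calc v (γ t') - v (γ t) ≤ C / 2 * ‖γ t' - γ t‖ ^ 2 := by linarith
            _ ≤ |C| / 2 * ‖γ t' - γ t‖ ^ 2 := hC
            _ ≤ K * (t' - t) ^ 2 := hb
        · calc v (γ t) - v (γ t') ≤ C / 2 * ‖γ t' - γ t‖ ^ 2 := by linarith
            _ ≤ |C| / 2 * ‖γ t' - γ t‖ ^ 2 := hC
            _ ≤ K * (t' - t) ^ 2 := hb
      rw [hasDerivWithinAt_iff_tendsto_slope]
      have hbound : ∀ᶠ y in 𝓝[Icc a b \ {t}] t,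
          ‖slope (fun s => v (γ s)) t y‖ ≤ K * |y - t| := by
        have hev : ∀ᶠ y in 𝓝[Icc a b \ {t}] t, y ∈ Icc a b \ {t} :=
          eventually_mem_nhdsWithin
        have hev2 : ∀ᶠ y in 𝓝[Icc a b \ {t}] t, |y - t| < r := by
          apply eventually_nhdsWithin_of_eventually_nhds
          have hb2 : Metric.ball t r ∈ 𝓝 t := Metric.ball_mem_nhds t hrpos
          filter_upwards [hb2] with y hy
          rwa [Metric.mem_ball, Real.dist_eq] at hy
        filter_upwards [hev, hev2] with y hy hyr
        have hyne : y ≠ t := hy.2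
        have hq := hquad y hy.1 hyr
        rw [slope_def_field, Real.norm_eq_abs, abs_div,
          div_le_iff₀ (abs_pos.mpr (sub_ne_zero.mpr hyne))]
        calc |v (γ y) - v (γ t)| ≤ K * (y - t) ^ 2 := hq
          _ = K * |y - t| * |y - t| := by rw [mul_assoc, abs_mul_abs_self, ← sq]
      have htend : Tendsto (fun y : ℝ => K * |y - t|) (𝓝[Icc a b \ {t}] t) (𝓝 0) := by
        have h1 : Tendsto (fun y : ℝ => K * |y - t|) (𝓝 t) (𝓝 0) := by
          have hc : Continuous (fun y : ℝ => K * |y - t|) := by continuity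
          have := hc.tendsto t
          simpa using this
        exact h1.mono_left nhdsWithin_le_nhds
      exact squeeze_zero_norm' hbound htend
    have hcont : ContinuousOn (fun s => v (γ s)) (Icc a b) :=
      fun t ht => (hderiv t ht).continuousWithinAt
    exact constant_of_has_deriv_right_zero hcont fun x hx =>
      (hderiv x ⟨hx.1, hx.2.le⟩).mono_of_mem_nhdsWithin (Icc_mem_nhdsGE_of_mem hx)
  refine ⟨key, ?_⟩
  intro c d hcd hsub
  by_contra h
  push_neg at h
  obtain ⟨xc, ⟨sc, hsc', rfl⟩, hvc⟩ := hsub (left_mem_Icc.mpr hcd.le)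
  obtain ⟨xd, ⟨sd, hsd', rfl⟩, hvd⟩ := hsub (right_mem_Icc.mpr hcd.le)
  have e1 := key h sc hsc'
  have e2 := key h sd hsd'
  rw [e1] at hvc
  rw [e2] at hvd
  linarith [hcd]
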